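/- Let R be a commutative ring, s ∈ R, and C an s-torsion-free R-module that is an s-contramodule. Then C is s-adically separated, i.e., ⋂_{n≥1} sⁿC = 0. -/

import Mathlib

open CategoryTheory Opposite

/-- Over a commutative ring `R`, every `s`-torsion-free `s`-contramodule
`R`-module `C` is `s`-adically separated: `⋂_{n≥1} sⁿC = 0`. -/
theorem sTorsionFree_sContramodule_implies_sSeparated
    (R : Type) [CommRing R] (s : R) (C : Type) [AddCommGroup C] [Module R C]
    (htf : Function.Injective (fun x : C => s • x))
    (hhom : Subsingleton (Localization.Away s →ₗ[R] C))
    (hext : Subsingleton (((Ext R (ModuleCat R) 1).obj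
      (op (ModuleCat.of R (Localization.Away s)))).obj (ModuleCat.of R C))) :
    ∀ x : C, (∀ n : ℕ, ∃ y : C, x = s ^ (n + 1) • y) → x = 0 := by
  intro x hx
  -- powers of s act injectively
  have pinj : ∀ n : ℕ, Function.Injective (fun c : C => s ^ n • c) := by
    intro n
    induction n with
    | zero => intro a b hab; simpa using hab
    | succ k ih =>
      intro a b hab
      simp only [pow_succ', mul_smul] at hab
      exact ih (htf hab)
  -- the sequence of divided elements
  choose y' hy' using hx
  set y : ℕ → C := fun n => Nat.rec x (fun k _ => y' k) n with hydef
  have hy : ∀ n : ℕ, x = s ^ n • y n := by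
    intro n
    cases n with
    | zero => simp [hydef]
    | succ k => exact hy' k
  -- key well-definedness lemma
  have key : ∀ (r₁ r₂ : R) (n₁ n₂ k : ℕ),
      s ^ k * (r₁ * s ^ n₂) = s ^ k * (r₂ * s ^ n₁) → r₁ • y n₁ = r₂ • y n₂ := by
    intro r₁ r₂ n₁ n₂ k h
    apply pinj (k + n₁ + n₂)
    show s ^ (k + n₁ + n₂) • r₁ • y n₁ = s ^ (k + n₁ + n₂) • r₂ • y n₂
    have e1 : s ^ (k + n₁ + n₂) • r₁ • y n₁ = (s ^ k * (r₁ * s ^ n₂)) • (s ^ n₁ • y n₁) := by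
      simp only [← mul_smul]; ring_nf
    have e2 : s ^ (k + n₁ + n₂) • r₂ • y n₂ = (s ^ k * (r₂ * s ^ n₁)) • (s ^ n₂ • y n₂) := by
      simp only [← mul_smul]; ring_nf
    rw [e1, e2, ← hy n₁, ← hy n₂, h]
  -- exponent of an element of the submonoid of powers
  have key' : ∀ (r₁ r₂ : R) (b d : Submonoid.powers s),
      (Localization.r (Submonoid.powers s)) (r₁, b) (r₂, d) →
      r₁ • y (Classical.choose b.2) = r₂ • y (Classical.choose d.2) := by
    intro r₁ r₂ b d hr
    obtain ⟨c, hc⟩ := Localization.r_iff_exists.mp hr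
    obtain ⟨k, hk⟩ := c.2
    have hk' : s ^ k = (c : R) := hk
    have hb : s ^ Classical.choose b.2 = (b : R) := Classical.choose_spec b.2
    have hd : s ^ Classical.choose d.2 = (d : R) := Classical.choose_spec d.2
    refine key r₁ r₂ (Classical.choose b.2) (Classical.choose d.2) k ?_
    rw [hb, hd, hk']
    simpa [mul_comm] using hc
  -- the function on the localization
  set f : Localization.Away s → C :=
    fun z => Localization.liftOn z (fun r m => r • y (Classical.choose m.2))
      (fun {a c b d} h => key' a c b d h) with hfdef
  have f_mk : ∀ (r : R) (b : Submonoid.powers s) (n : ℕ), s ^ n = (b : R) →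
      f (Localization.mk r b) = r • y n := by
    intro r b n hn
    rw [hfdef]
    simp only [Localization.liftOn_mk]
    have hb : s ^ Classical.choose b.2 = (b : R) := Classical.choose_spec b.2
    refine key r r (Classical.choose b.2) n 0 ?_
    rw [hn, hb]
  -- f is additive
  have f_add : ∀ z w : Localization.Away s, f (z + w) = f z + f w := by
    intro z w
    induction z using Localization.ind with
    | _ p =>
    induction w using Localization.ind with
    | _ q =>
    obtain ⟨a, b⟩ := p
    obtain ⟨c, d⟩ := q
    obtain ⟨n, hn⟩ := b.2
    obtain ⟨m, hm⟩ := d.2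
    rw [Localization.add_mk,
      f_mk _ _ (n + m) (by simp [pow_add, hn, hm]),
      f_mk a b n hn, f_mk c d m hm]
    have : (↑b * c + ↑d * a) • y (n + m)
        = c • (s ^ n • y (n + m)) + a • (s ^ m • y (n + m)) := by
      rw [← hn, ← hm]
      simp only [← mul_smul, add_smul]
      ring_nf
    rw [this]
    have h1 : s ^ n • y (n + m) = y m := by
      apply pinj m
      show s ^ m • s ^ n • y (n + m) = s ^ m • y m
      rw [← mul_smul, ← pow_add, add_comm n m, ← hy (m + n), ← hy m]
    have h2 : s ^ m • y (n + m) = y n := by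
      apply pinj n
      show s ^ n • s ^ m • y (n + m) = s ^ n • y n
      rw [← mul_smul, ← pow_add, ← hy (n + m), ← hy n]
    rw [h1, h2, add_comm]
  have f_smul : ∀ (r : R) (z : Localization.Away s), f (r • z) = r • f z := by
    intro r z
    induction z using Localization.ind with
    | _ p =>
    obtain ⟨a, b⟩ := p
    obtain ⟨n, hn⟩ := b.2
    rw [Localization.smul_mk, f_mk _ _ n hn, f_mk a b n hn, smul_eq_mul, mul_smul]
  set F : Localization.Away s →ₗ[R] C :=
    { toFun := f, map_add' := f_add, map_smul' := f_smul } with hF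
  have hF0 : F = 0 := Subsingleton.elim _ _
  have : x = F 1 := by
    have h1 : (1 : Localization.Away s) = Localization.mk 1 1 := by
      rw [Localization.mk_one]
    show x = f 1
    rw [h1, f_mk 1 1 0 (by simp)]
    simp [hydef]
  rw [this, hF0]
  simp
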